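/- Let T₀, T₁, y₀, y₁ be nonzero complex polynomials and let f₀, f₁ be nonzero monic complex polynomials such that f₁² divides T₀·f₀² and f₀² divides T₁·f₁²; set T₀° = T₀·f₀²/f₁² and T₁° = T₁·f₁²/f₀². If (y₀,y₁) is fertile with respect to (T₀,T₁), then (f₀·y₀, f₁·y₁) is fertile with respect to (T₀°,T₁°). -/
import Mathlib


open Polynomial

noncomputable section

/-- The Wronskian of two polynomials: `Wr(f,g) = f·g′ − f′·g`. -/
def pWr (f g : ℂ[X]) : ℂ[X] := f * derivative g - derivative f * g

/-- A pair `y = (y₀,y₁)` of nonzero polynomials is fertile with respect to a pair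
`T = (T₀,T₁)` if there exist `ỹ₀, ỹ₁` with `Wr(y₀,ỹ₀) = T₀·y₁²` and `Wr(y₁,ỹ₁) = T₁·y₀²`. -/
def Fertile (T y : ℂ[X] × ℂ[X]) : Prop :=
  y.1 ≠ 0 ∧ y.2 ≠ 0 ∧
  ∃ ty0 ty1 : ℂ[X], pWr y.1 ty0 = T.1 * y.2 ^ 2 ∧ pWr y.2 ty1 = T.2 * y.1 ^ 2

/-- If `(y₀,y₁)` is fertile with respect to `(T₀,T₁)`, `f₀, f₁` are monic, `f₁²` divides
`T₀·f₀²` with quotient `T₀°` and `f₀²` divides `T₁·f₁²` with quotient `T₁°`, then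
`(f₀·y₀, f₁·y₁)` is fertile with respect to `(T₀°, T₁°)`. -/
theorem fertile_mul (T0 T1 y0 y1 f0 f1 T0c T1c : ℂ[X])
    (hT0 : T0 ≠ 0) (hT1 : T1 ≠ 0) (hy0 : y0 ≠ 0) (hy1 : y1 ≠ 0)
    (hf0 : f0.Monic) (hf1 : f1.Monic)
    (hd0 : T0 * f0 ^ 2 = f1 ^ 2 * T0c) (hd1 : T1 * f1 ^ 2 = f0 ^ 2 * T1c)
    (hfert : Fertile (T0, T1) (y0, y1)) :
    Fertile (T0c, T1c) (f0 * y0, f1 * y1) := by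
  obtain ⟨-, -, ty0, ty1, h0, h1⟩ := hfert
  simp only [pWr] at h0 h1 ⊢
  refine ⟨mul_ne_zero hf0.ne_zero hy0, mul_ne_zero hf1.ne_zero hy1,
    f0 * ty0, f1 * ty1, ?_, ?_⟩
  · simp only [pWr, derivative_mul]
    linear_combination f0 ^ 2 * h0 + y1 ^ 2 * hd0
  · simp only [pWr, derivative_mul]
    linear_combination f1 ^ 2 * h1 + y0 ^ 2 * hd1
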